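/- Let ξ be a standard Gaussian random variable and H_n the Hermite polynomials defined by H_n(t) = (-1)^n e^{t²/2} (d^n/dt^n) e^{-t²/2}. For nonnegative integers a, b, c, the expectation E[H_a(ξ)H_b(ξ)H_c(ξ)] equals a!b!c! / (((a+b-c)/2)! ((a-b+c)/2)! ((-a+b+c)/2)!) if a+b+c is even and |a-b| ≤ c ≤ a+b, and equals 0 otherwise. -/

import Mathlib

open MeasureTheory ProbabilityTheory Polynomial

lemma derivative_hermite_int (n : ℕ) :
    derivative (hermite (n + 1)) = C ((n : ℤ) + 1) * hermite n := by
  ext k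
  rw [coeff_derivative, coeff_C_mul, coeff_hermite, coeff_hermite]
  have hpar : Even (n + 1 + (k + 1)) ↔ Even (n + k) := by
    rw [Nat.even_iff, Nat.even_iff]; omega
  rw [if_congr hpar rfl rfl]
  split_ifs with h
  · have hs : n + 1 - (k + 1) = n - k := by omega
    rw [hs]
    have h0 : (n + 1).choose (k + 1) * (k + 1) = (n + 1) * n.choose k := by
      simpa [Nat.succ_eq_add_one, mul_comm] using (Nat.add_one_mul_choose_eq n k).symm
    have hc : ((n + 1).choose (k + 1) : ℤ) * ((k : ℤ) + 1) = ((n : ℤ) + 1) * (n.choose k : ℤ) := by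
      exact_mod_cast congrArg (Nat.cast : ℕ → ℤ) h0
    linear_combination ((-1 : ℤ) ^ ((n - k) / 2) * ((n - k - 1).doubleFactorial : ℤ)) * hc
  · simp

noncomputable def Hp (n : ℕ) : ℝ[X] := (hermite n).map (algebraMap ℤ ℝ)

lemma Hp_zero : Hp 0 = 1 := by simp [Hp]

lemma Hp_succ (n : ℕ) : Hp (n + 1) = X * Hp n - derivative (Hp n) := by
  simp [Hp, hermite_succ, Polynomial.map_sub, Polynomial.map_mul, derivative_map]

lemma derivative_Hp (n : ℕ) : derivative (Hp (n + 1)) = C ((n : ℝ) + 1) * Hp n := by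
  rw [Hp, derivative_map, derivative_hermite_int, Polynomial.map_mul, map_C]
  push_cast
  rfl

lemma aeval_eq_Hp (n : ℕ) (x : ℝ) : (aeval x (hermite n) : ℝ) = eval x (Hp n) := by
  rw [Hp, eval_map, aeval_def]

lemma iterate_derivative_Hp (n k : ℕ) :
    derivative^[k] (Hp n) = C ((n.descFactorial k : ℝ)) * Hp (n - k) := by
  induction k with
  | zero => simp
  | succ k ih =>
    rw [Function.iterate_succ_apply', ih, derivative_mul, derivative_C, zero_mul, zero_add]
    rcases hnk : n - k with _ | m
    · rw [Hp_zero, derivative_one, mul_zero]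
      have : n.descFactorial (k + 1) = 0 := by
        rw [Nat.descFactorial_eq_zero_iff_lt]; omega
      rw [this]
      simp
    · rw [derivative_Hp, ← mul_assoc, ← C_mul]
      have h1 : n - (k + 1) = m := by omega
      have h2 : (n.descFactorial (k + 1) : ℝ) = (n.descFactorial k : ℝ) * ((m : ℝ) + 1) := by
        rw [Nat.descFactorial_succ, hnk]
        push_cast
        ring
      rw [h1, h2]

noncomputable def G (x : ℝ) : ℝ := Real.exp (-(x ^ 2 / 2))

lemma integrable_pow_G (n : ℕ) : Integrable (fun x : ℝ => x ^ n * G x) := by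
  have h := integrable_rpow_mul_exp_neg_mul_sq (b := (1 : ℝ) / 2) (by norm_num) (s := (n : ℝ))
    (lt_of_lt_of_le (by norm_num) (Nat.cast_nonneg n))
  simpa only [Real.rpow_natCast, G, show ∀ x : ℝ, -(1 / 2 : ℝ) * x ^ 2 = -(x ^ 2 / 2) from
    fun x => by ring] using h

lemma integrable_poly_G (p : ℝ[X]) : Integrable (fun x : ℝ => eval x p * G x) := by
  have : (fun x : ℝ => eval x p * G x) =
      fun x => ∑ i ∈ Finset.range (p.natDegree + 1), p.coeff i * (x ^ i * G x) := by
    funext x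
    rw [eval_eq_sum_range, Finset.sum_mul]
    exact Finset.sum_congr rfl fun i _ => by ring
  rw [this]
  exact integrable_finset_sum _ fun i _ => (integrable_pow_G i).const_mul _

lemma hasDerivAt_G (x : ℝ) : HasDerivAt G (-x * G x) x := by
  have h : HasDerivAt (fun y : ℝ => -(y ^ 2 / 2)) (-x) x := by
    have := (hasDerivAt_pow 2 x).div_const 2
    have h2 : HasDerivAt (fun y : ℝ => -(y ^ 2 / 2)) (-((2 : ℕ) * x ^ (2 - 1) / 2)) x := this.neg
    convert h2 using 1
    norm_num
  unfold G
  simpa [mul_comm] using h.exp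

noncomputable def IG (p : ℝ[X]) : ℝ := ∫ x : ℝ, eval x p * G x

lemma IG_add (p q : ℝ[X]) : IG (p + q) = IG p + IG q := by
  unfold IG
  simp only [eval_add, add_mul]
  exact integral_add (integrable_poly_G p) (integrable_poly_G q)

lemma IG_Cmul (r : ℝ) (p : ℝ[X]) : IG (C r * p) = r * IG p := by
  unfold IG
  simp only [eval_mul, eval_C, mul_assoc]
  exact MeasureTheory.integral_const_mul r _

lemma IG_zero : IG 0 = 0 := by simp [IG]

lemma IG_ibp (p : ℝ[X]) : IG (X * p - derivative p) = 0 := by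
  have hu : ∀ x : ℝ, HasDerivAt (fun y => eval y p) (eval x (derivative p)) x :=
    fun x => p.hasDerivAt x
  have key := integral_mul_deriv_eq_deriv_mul_of_integrable (fun x _ => hu x) (fun x _ => hasDerivAt_G x)
    ?_ ?_ ?_
  · unfold IG
    have : ∀ x : ℝ, eval x (X * p - derivative p) * G x =
        -((fun y => eval y p) x * (-x * G x)) - eval x (derivative p) * G x := by
      intro x; simp [eval_mul, eval_sub]; ring
    rw [integral_congr_ae (Filter.Eventually.of_forall this)]
    rw [integral_sub ?_ (integrable_poly_G (derivative p))]
    · rw [integral_neg, key]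
      ring
    · have h2 := integrable_poly_G (X * p)
      simp only [eval_mul, eval_X] at h2
      apply h2.neg.neg.congr
      filter_upwards with x
      simp only [Pi.neg_apply]
      ring
  · have : ((fun y => eval y p) * fun x => -x * G x) =
        fun x : ℝ => -(eval x (X * p) * G x) := by
      funext x; simp [eval_mul]; ring
    rw [this]
    exact (integrable_poly_G (X * p)).neg
  · exact integrable_poly_G (derivative p)
  · exact integrable_poly_G p

lemma IG_sum {s : Finset ℕ} (f : ℕ → ℝ[X]) : IG (∑ i ∈ s, f i) = ∑ i ∈ s, IG (f i) := by
  unfold IG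
  simp only [eval_finset_sum, Finset.sum_mul]
  exact integral_finset_sum _ fun i _ => integrable_poly_G (f i)

lemma IG_nsmul (n : ℕ) (p : ℝ[X]) : IG (n • p) = (n : ℝ) * IG p := by
  rw [nsmul_eq_mul, ← Polynomial.C_eq_natCast, IG_Cmul]

lemma IG_step (n : ℕ) (q : ℝ[X]) : IG (Hp (n + 1) * q) = IG (Hp n * derivative q) := by
  have key : Hp (n + 1) * q =
      (X * (Hp n * q) - derivative (Hp n * q)) + Hp n * derivative q := by
    rw [Hp_succ, derivative_mul]; ring
  rw [key, IG_add, IG_ibp, zero_add]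

lemma IG_iter (n : ℕ) (q : ℝ[X]) : IG (Hp n * q) = IG (derivative^[n] q) := by
  induction n generalizing q with
  | zero => rw [Hp_zero, one_mul]; rfl
  | succ n ih => rw [IG_step, ih (derivative q), ← Function.iterate_succ_apply]

lemma IG_H (r : ℕ) : IG (Hp r) = if r = 0 then IG 1 else 0 := by
  cases r with
  | zero => rw [Hp_zero]; simp
  | succ s =>
    have h := IG_iter (s + 1) 1
    rw [mul_one] at h
    rw [h, Function.iterate_succ_apply, derivative_one, iterate_derivative_zero, IG_zero]
    simp

lemma IG_orth (b c : ℕ) : IG (Hp b * Hp c) = (if b = c then (b.factorial : ℝ) else 0) * IG 1 := by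
  rw [IG_iter, iterate_derivative_Hp, IG_Cmul, IG_H]
  rcases lt_trichotomy b c with h | h | h
  · rw [if_neg (by omega), if_neg (by omega)]
    ring
  · subst h
    rw [if_pos (by omega), if_pos rfl, Nat.descFactorial_self]
  · rw [Nat.descFactorial_eq_zero_iff_lt.2 h, if_neg (show ¬ b = c by omega)]
    simp

lemma IG_main (a b c : ℕ) : IG (Hp a * (Hp b * Hp c)) =
    (∑ i ∈ Finset.range (a + 1),
      (a.choose i * b.descFactorial (a - i) * c.descFactorial i : ℝ) *
        (if b - (a - i) = c - i then ((b - (a - i)).factorial : ℝ) else 0)) * IG 1 := by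
  rw [IG_iter, Polynomial.iterate_derivative_mul, IG_sum, Finset.sum_mul]
  refine Finset.sum_congr rfl fun i hi => ?_
  rw [IG_nsmul, iterate_derivative_Hp, iterate_derivative_Hp,
    mul_mul_mul_comm, ← C_mul, IG_Cmul, IG_orth]
  split_ifs with h <;> ring

open Real
open scoped NNReal ENNReal


lemma gauss_int (f : ℝ → ℝ) :
    ∫ x, f x ∂(gaussianReal 0 1) = ∫ x, gaussianPDFReal 0 1 x * f x := by
  rw [gaussianReal_of_var_ne_zero 0 one_ne_zero]
  have hd : gaussianPDF 0 1 = fun x => ((Real.toNNReal (gaussianPDFReal 0 1 x) : ℝ≥0) : ℝ≥0∞) :=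
    rfl
  rw [hd, integral_withDensity_eq_integral_smul
    ((measurable_gaussianPDFReal 0 1).real_toNNReal) f]
  refine integral_congr_ae (Filter.Eventually.of_forall fun x => ?_)
  show (gaussianPDFReal 0 1 x).toNNReal • f x = gaussianPDFReal 0 1 x * f x
  rw [NNReal.smul_def, smul_eq_mul, Real.coe_toNNReal _ (gaussianPDFReal_nonneg 0 1 x)]

lemma pdf_eq (x : ℝ) : gaussianPDFReal 0 1 x = (Real.sqrt (2 * π))⁻¹ * G x := by
  simp only [gaussianPDFReal, NNReal.coe_one, mul_one, sub_zero]
  rw [G, neg_div]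

lemma dF_fact {b k : ℕ} (h : k ≤ b) :
    b.descFactorial k * (b - k).factorial = b.factorial := by
  rw [Nat.descFactorial_eq_factorial_mul_choose]
  calc k.factorial * b.choose k * (b - k).factorial
      = b.choose k * k.factorial * (b - k).factorial := by ring
    _ = b.factorial := Nat.choose_mul_factorial_mul_factorial h

lemma comb (a b c : ℕ) :
    (∑ i ∈ Finset.range (a + 1),
      (a.choose i * b.descFactorial (a - i) * c.descFactorial i : ℝ) *
        (if b - (a - i) = c - i then ((b - (a - i)).factorial : ℝ) else 0)) =
    if Even (a + b + c) ∧ c ≤ a + b ∧ a ≤ b + c ∧ b ≤ a + c then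
      (a.factorial * b.factorial * c.factorial : ℝ) /
        ((((a + b - c) / 2).factorial : ℝ) * (((a + c - b) / 2).factorial : ℝ) *
          (((b + c - a) / 2).factorial : ℝ))
    else 0 := by
  by_cases hP : Even (a + b + c) ∧ c ≤ a + b ∧ a ≤ b + c ∧ b ≤ a + c
  · rw [if_pos hP]
    obtain ⟨he, hc, ha, hb⟩ := hP
    rw [Nat.even_iff] at he
    set i0 := (a + c - b) / 2 with hi0
    rw [Finset.sum_eq_single i0]
    · have h1 : a - i0 = (a + b - c) / 2 := by omega
      have hif : b - (a - i0) = c - i0 := by omega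
      have h3 : c - i0 = (b + c - a) / 2 := by omega
      rw [if_pos hif, hif]
      have e1 : a.choose i0 * (i0.factorial * (a - i0).factorial) = a.factorial := by
        rw [← mul_assoc]
        exact Nat.choose_mul_factorial_mul_factorial (by omega)
      have e2 : b.descFactorial (a - i0) * (c - i0).factorial = b.factorial := by
        rw [← hif]; exact dF_fact (by omega)
      have e3 : c.descFactorial i0 * (c - i0).factorial = c.factorial := dF_fact (by omega)
      have nkey : a.choose i0 * b.descFactorial (a - i0) * c.descFactorial i0 *
          (c - i0).factorial *
          (((a + b - c) / 2).factorial * (((a + c - b) / 2).factorial) *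
            (((b + c - a) / 2).factorial)) = a.factorial * (b.factorial * c.factorial) := by
        rw [← h1, ← hi0, ← h3, ← e1, ← e2, ← e3]
        ring
      rw [eq_div_iff (by simp [Nat.factorial_ne_zero])]
      have rkey := congrArg (Nat.cast : ℕ → ℝ) nkey
      push_cast at rkey
      linear_combination rkey
    · intro j hj hne
      rw [Finset.mem_range] at hj
      by_cases h1 : b < a - j
      · rw [Nat.descFactorial_eq_zero_iff_lt.2 h1]; simp
      by_cases h2 : c < j
      · rw [Nat.descFactorial_eq_zero_iff_lt.2 h2]; simp
      by_cases h3 : b - (a - j) = c - j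
      · exfalso; apply hne; omega
      · rw [if_neg h3]; simp
    · intro h
      exact absurd (Finset.mem_range.2 (by omega)) h
  · rw [if_neg hP]
    apply Finset.sum_eq_zero
    intro i hi
    rw [Finset.mem_range] at hi
    by_cases h1 : b < a - i
    · rw [Nat.descFactorial_eq_zero_iff_lt.2 h1]; simp
    by_cases h2 : c < i
    · rw [Nat.descFactorial_eq_zero_iff_lt.2 h2]; simp
    by_cases h3 : b - (a - i) = c - i
    · exfalso
      apply hP
      refine ⟨?_, by omega, by omega, by omega⟩
      rw [Nat.even_iff]
      omega
    · rw [if_neg h3]; simp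
/-- For ξ standard Gaussian and probabilists' Hermite polynomials H_n,
E[H_a(ξ)H_b(ξ)H_c(ξ)] = a!b!c! / (((a+b-c)/2)! ((a-b+c)/2)! ((-a+b+c)/2)!) if
a+b+c is even and |a-b| ≤ c ≤ a+b, and 0 otherwise. -/
theorem stmt3 (a b c : ℕ) :
    (∫ x, (Polynomial.aeval x (Polynomial.hermite a)) *
          (Polynomial.aeval x (Polynomial.hermite b)) *
          (Polynomial.aeval x (Polynomial.hermite c)) ∂(gaussianReal 0 1) : ℝ) =
      if Even (a + b + c) ∧ c ≤ a + b ∧ a ≤ b + c ∧ b ≤ a + c then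
        (a.factorial * b.factorial * c.factorial : ℝ) /
          ((((a + b - c) / 2).factorial : ℝ) * (((a + c - b) / 2).factorial : ℝ) *
            (((b + c - a) / 2).factorial : ℝ))
      else 0 := by
  have hone : (Real.sqrt (2 * π))⁻¹ * IG 1 = 1 := by
    calc (Real.sqrt (2 * π))⁻¹ * IG 1
        = ∫ x : ℝ, (Real.sqrt (2 * π))⁻¹ * (eval x (1 : ℝ[X]) * G x) :=
          (MeasureTheory.integral_const_mul _ _).symm
      _ = ∫ x : ℝ, gaussianPDFReal 0 1 x :=
          integral_congr_ae (Filter.Eventually.of_forall fun x => by rw [pdf_eq]; simp)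
      _ = 1 := integral_gaussianPDFReal_eq_one 0 one_ne_zero
  calc (∫ x, (Polynomial.aeval x (Polynomial.hermite a)) *
          (Polynomial.aeval x (Polynomial.hermite b)) *
          (Polynomial.aeval x (Polynomial.hermite c)) ∂(gaussianReal 0 1) : ℝ)
      = ∫ x, eval x (Hp a * (Hp b * Hp c)) ∂(gaussianReal 0 1) := by
        refine integral_congr_ae (Filter.Eventually.of_forall fun x => ?_)
        show (aeval x (hermite a) : ℝ) * aeval x (hermite b) * aeval x (hermite c) =
          eval x (Hp a * (Hp b * Hp c))
        rw [aeval_eq_Hp, aeval_eq_Hp, aeval_eq_Hp]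
        simp only [eval_mul]
        ring
    _ = ∫ x : ℝ, gaussianPDFReal 0 1 x * eval x (Hp a * (Hp b * Hp c)) := gauss_int _
    _ = ∫ x : ℝ, (Real.sqrt (2 * π))⁻¹ * (eval x (Hp a * (Hp b * Hp c)) * G x) :=
        integral_congr_ae (Filter.Eventually.of_forall fun x => by
          show gaussianPDFReal 0 1 x * eval x (Hp a * (Hp b * Hp c)) = _
          rw [pdf_eq]; ring)
    _ = (Real.sqrt (2 * π))⁻¹ * IG (Hp a * (Hp b * Hp c)) :=
        MeasureTheory.integral_const_mul _ _
    _ = (∑ i ∈ Finset.range (a + 1),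
          (a.choose i * b.descFactorial (a - i) * c.descFactorial i : ℝ) *
            (if b - (a - i) = c - i then ((b - (a - i)).factorial : ℝ) else 0)) *
          ((Real.sqrt (2 * π))⁻¹ * IG 1) := by rw [IG_main]; ring
    _ = _ := by rw [hone, mul_one, comb]
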